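/- Let x̄ ∈ ℝⁿ>0 be a complex balanced equilibrium of a mass-action system, and let x ∈ ℝⁿ>0 satisfy (x/x̄)^{y'·ᵢ} = (x/x̄)^{y·ᵢ} for every reaction i. Then x is an equilibrium: ∑ᵢ kᵢ x^{y·ᵢ}(y'·ᵢ − y·ᵢ) = 0. -/
import Mathlib


open scoped BigOperators

/-- If `x̄` is a complex balanced equilibrium and `x > 0` satisfies
`(x/x̄)^{y'ᵢ} = (x/x̄)^{yᵢ}` for every reaction, then `x` is an equilibrium. -/
theorem scaled_point_is_equilibrium {n r : ℕ}
    (y y' : Fin r → Fin n → ℕ) (k : Fin r → ℝ) (hk : ∀ i, 0 < k i)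
    (xb : Fin n → ℝ) (hxb : ∀ j, 0 < xb j)
    (hcb : ∀ z : Fin n → ℕ,
      ∑ i ∈ Finset.univ.filter (fun i => y i = z), k i * ∏ j, xb j ^ z j
        = ∑ i ∈ Finset.univ.filter (fun i => y' i = z), k i * ∏ j, xb j ^ y i j)
    (x : Fin n → ℝ) (hx : ∀ j, 0 < x j)
    (hratio : ∀ i, ∏ j, (x j / xb j) ^ y' i j = ∏ j, (x j / xb j) ^ y i j) :
    ∑ i, (k i * ∏ j, x j ^ y i j) • (fun j => ((y' i j : ℝ) - (y i j : ℝ)))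
      = (0 : Fin n → ℝ) := by
  classical
  -- splitting x^m = (x/xb)^m * xb^m
  have hprod : ∀ m : Fin n → ℕ,
      (∏ j, x j ^ m j) = (∏ j, (x j / xb j) ^ m j) * ∏ j, xb j ^ m j := by
    intro m
    rw [← Finset.prod_mul_distrib]
    refine Finset.prod_congr rfl fun j _ => ?_
    rw [← mul_pow, div_mul_cancel₀ _ (hxb j).ne']
  -- key per-complex identity
  have key : ∀ z : Fin n → ℕ,
      ∑ i ∈ Finset.univ.filter (fun i => y' i = z), k i * ∏ j, x j ^ y i j
        = ∑ i ∈ Finset.univ.filter (fun i => y i = z), k i * ∏ j, x j ^ y i j := by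
    intro z
    have hL : ∑ i ∈ Finset.univ.filter (fun i => y' i = z), k i * ∏ j, x j ^ y i j
        = (∏ j, (x j / xb j) ^ z j) *
          ∑ i ∈ Finset.univ.filter (fun i => y' i = z), k i * ∏ j, xb j ^ y i j := by
      rw [Finset.mul_sum]
      refine Finset.sum_congr rfl fun i hi => ?_
      have hi' : y' i = z := (Finset.mem_filter.mp hi).2
      rw [hprod (y i), ← hratio i, hi']
      ring
    have hR : ∑ i ∈ Finset.univ.filter (fun i => y i = z), k i * ∏ j, x j ^ y i j
        = (∏ j, (x j / xb j) ^ z j) *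
          ∑ i ∈ Finset.univ.filter (fun i => y i = z), k i * ∏ j, xb j ^ z j := by
      rw [Finset.mul_sum]
      refine Finset.sum_congr rfl fun i hi => ?_
      have hi' : y i = z := (Finset.mem_filter.mp hi).2
      rw [hi', hprod z]
      ring
    rw [hL, hR, hcb z]
  funext j
  simp only [Finset.sum_apply, Pi.smul_apply, smul_eq_mul, Pi.zero_apply]
  have : ∑ i, (k i * ∏ j', x j' ^ y i j') * ((y' i j : ℝ) - (y i j : ℝ))
      = (∑ i, (k i * ∏ j', x j' ^ y i j') * (y' i j : ℝ))
        - ∑ i, (k i * ∏ j', x j' ^ y i j') * (y i j : ℝ) := by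
    rw [← Finset.sum_sub_distrib]
    exact Finset.sum_congr rfl fun i _ => by ring
  rw [this, sub_eq_zero]
  set C : Finset (Fin n → ℕ) :=
    (Finset.univ.image y) ∪ (Finset.univ.image y') with hC
  have hmapL : ∀ i ∈ (Finset.univ : Finset (Fin r)), y' i ∈ C := fun i _ =>
    Finset.mem_union_right _ (Finset.mem_image_of_mem y' (Finset.mem_univ i))
  have hmapR : ∀ i ∈ (Finset.univ : Finset (Fin r)), y i ∈ C := fun i _ =>
    Finset.mem_union_left _ (Finset.mem_image_of_mem y (Finset.mem_univ i))
  rw [← Finset.sum_fiberwise_of_maps_to hmapL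
      (fun i => (k i * ∏ j', x j' ^ y i j') * (y' i j : ℝ)),
      ← Finset.sum_fiberwise_of_maps_to hmapR
      (fun i => (k i * ∏ j', x j' ^ y i j') * (y i j : ℝ))]
  refine Finset.sum_congr rfl fun z _ => ?_
  have eL : ∑ i ∈ Finset.univ.filter (fun i => y' i = z),
      (k i * ∏ j', x j' ^ y i j') * (y' i j : ℝ)
      = (∑ i ∈ Finset.univ.filter (fun i => y' i = z),
          k i * ∏ j', x j' ^ y i j') * (z j : ℝ) := by
    rw [Finset.sum_mul]
    refine Finset.sum_congr rfl fun i hi => ?_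
    rw [(Finset.mem_filter.mp hi).2]
  have eR : ∑ i ∈ Finset.univ.filter (fun i => y i = z),
      (k i * ∏ j', x j' ^ y i j') * (y i j : ℝ)
      = (∑ i ∈ Finset.univ.filter (fun i => y i = z),
          k i * ∏ j', x j' ^ y i j') * (z j : ℝ) := by
    rw [Finset.sum_mul]
    refine Finset.sum_congr rfl fun i hi => ?_
    rw [(Finset.mem_filter.mp hi).2]
  rw [eL, eR, key z]
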